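/- Let k be a field and v the odd derivation v = θ ∂_z on A = k[z, θ] (z even, θ odd with θ² = 0), i.e., v(z) = θ, v(θ) = 0. Then ker(v) = k + θ·k[z] as a k-subalgebra of A, and this subalgebra is not finitely generated as a k-algebra. -/
import Mathlib


open Polynomial TrivSqZeroExt

/-- The superalgebra `A = k[z,θ]` (`z` even, `θ` odd, `θ² = 0`), realized as the
trivial square-zero extension of `k[z]` by `k[z]` (second coordinate = coefficient
of `θ`). -/
abbrev SuperAff (k : Type*) [Field k] : Type _ :=
  TrivSqZeroExt (Polynomial k) (Polynomial k)

/-- The odd derivation `v = θ ∂_z`: `v(p + θ q) = θ p'`. -/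
noncomputable def vField (k : Type*) [Field k] : SuperAff k → SuperAff k :=
  fun a => TrivSqZeroExt.inr (Polynomial.derivative a.fst)

/-- The subalgebra of elements with constant first component and second component of
`natDegree ≤ N`. -/
def boundedSub (k : Type*) [Field k] (N : ℕ) : Subalgebra k (SuperAff k) where
  carrier := {a | a.fst.natDegree = 0 ∧ a.snd.natDegree ≤ N}
  mul_mem' := by
    rintro a b ⟨ha1, ha2⟩ ⟨hb1, hb2⟩
    constructor
    · rw [fst_mul]
      exact le_antisymm (le_trans (natDegree_mul_le) (by omega)) (Nat.zero_le _)
    · rw [snd_mul]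
      refine le_trans (natDegree_add_le _ _) (max_le ?_ ?_)
      · rw [smul_eq_mul]
        exact le_trans natDegree_mul_le (by omega)
      · rw [op_smul_eq_mul]
        exact le_trans natDegree_mul_le (by omega)
  add_mem' := by
    rintro a b ⟨ha1, ha2⟩ ⟨hb1, hb2⟩
    constructor
    · rw [fst_add]
      exact le_antisymm (le_trans (natDegree_add_le _ _) (by omega)) (Nat.zero_le _)
    · rw [snd_add]
      exact le_trans (natDegree_add_le _ _) (by omega)
  algebraMap_mem' := fun c => by
    constructor
    · simp [algebraMap_eq_inl']
    · simp [algebraMap_eq_inl']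

/-- for `v = θ ∂_z` on `A = k[z,θ]` (char 0), the kernel of `v` is
`k + θ·k[z]`, and this subalgebra is not finitely generated as a `k`-algebra. -/
theorem stmt16 (k : Type*) [Field k] [CharZero k] :
    (∀ a : SuperAff k, vField k a = 0 ↔
      ∃ (c : k) (q : Polynomial k),
        a = algebraMap k (SuperAff k) c + TrivSqZeroExt.inr q) ∧
    ¬ ∃ s : Finset (SuperAff k),
        (∀ x ∈ s, vField k x = 0) ∧
        ∀ a : SuperAff k, vField k a = 0 →
          a ∈ Algebra.adjoin k (s : Set (SuperAff k)) := by
  have hker : ∀ a : SuperAff k, vField k a = 0 ↔ Polynomial.derivative a.fst = 0 := by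
    intro a
    unfold vField
    constructor
    · intro h
      have := congrArg TrivSqZeroExt.snd h
      simpa using this
    · intro h; rw [h]; simp
  constructor
  · intro a
    rw [hker]
    constructor
    · intro h
      have hC : a.fst = C (a.fst.coeff 0) := eq_C_of_derivative_eq_zero h
      refine ⟨a.fst.coeff 0, a.snd, ?_⟩
      conv_lhs => rw [← inl_fst_add_inr_snd_eq a]
      rw [algebraMap_eq_inl']
      simp only [Polynomial.algebraMap_eq]
      rw [← hC]
    · rintro ⟨c, q, rfl⟩
      rw [fst_add, algebraMap_eq_inl']
      simp
  · rintro ⟨s, hs0, hs⟩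
    set N := s.sup (fun x => x.snd.natDegree) with hN
    have hle : Algebra.adjoin k (s : Set (SuperAff k)) ≤ boundedSub k N := by
      apply Algebra.adjoin_le
      intro x hx
      have hx' := hs0 x hx
      rw [hker] at hx'
      constructor
      · exact natDegree_eq_zero_of_derivative_eq_zero hx'
      · exact Finset.le_sup (f := fun x => x.snd.natDegree) hx
    have hmem : (TrivSqZeroExt.inr (X ^ (N + 1)) : SuperAff k) ∈
        Algebra.adjoin k (s : Set (SuperAff k)) := by
      apply hs
      rw [hker]
      simp
    have := (hle hmem).2
    simp [Polynomial.natDegree_X_pow] at this
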